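/- Let S be a reduced atomic monoid and s ∈ S. Then ω(S,s) = sup{ |x| : x ∈ Min(Z(sS)) }, where Z(sS) is the set of factorizations (formal products of atoms) whose image in S is divisible by s, Min denotes the minimal elements with respect to divisibility in the free monoid Z(S), and |x| is the length of the factorization x. -/

import Mathlib

open scoped BigOperators

private lemma multiset_split {α : Type*} {t a b : Multiset α} (h : t ≤ a + b) :
    ∃ t₁ t₂ : Multiset α, t₁ ≤ a ∧ t₂ ≤ b ∧ t = t₁ + t₂ := by
  classical
  refine ⟨t ∩ a, t - a, Multiset.inter_le_right, ?_, ?_⟩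
  · rw [Multiset.sub_le_iff_le_add]
    rwa [add_comm] at h
  · ext x
    simp only [Multiset.count_add, Multiset.count_inter, Multiset.count_sub]
    omega

private lemma multiset_split_sum {ι α : Type*} [DecidableEq ι] (I : Finset ι)
    (f : ι → Multiset α) (t : Multiset α) (h : t ≤ ∑ i ∈ I, f i) :
    ∃ g : ι → Multiset α, (∀ i, g i ≤ f i) ∧ t = ∑ i ∈ I, g i := by
  classical
  induction I using Finset.induction generalizing t with
  | empty =>
    rw [Finset.sum_empty] at h
    exact ⟨fun _ => 0, fun _ => zero_le, by simp [le_antisymm h (zero_le : 0 ≤ t)]⟩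
  | insert _ _ hj ih =>
    rename_i j I'
    rw [Finset.sum_insert hj] at h
    obtain ⟨t₁, t₂, ht₁, ht₂, rfl⟩ := multiset_split h
    obtain ⟨g', hg', hg'sum⟩ := ih t₂ ht₂
    refine ⟨fun i => if i = j then t₁ else g' i, fun i => ?_, ?_⟩
    · by_cases hi : i = j <;> simp [hi, ht₁, hg' i]
    · rw [Finset.sum_insert hj, if_pos rfl]
      congr 1
      rw [hg'sum]
      exact Finset.sum_congr rfl fun i hi => by
        rw [if_neg]; rintro rfl; exact hj hi

/-- For a reduced atomic monoid `S` and `s ∈ S`,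
`ω(S,s) = sup{ |x| : x ∈ Min(Z(sS)) }`. Factorizations are modelled as multisets
of irreducible elements of `S`, `Z(sS)` being those whose product is divisible by `s`,
minimality being with respect to the divisibility (sub-multiset) order. -/
theorem omega_eq_sup_min_lengths {S : Type*} [CancelCommMonoid S]
    (hred : ∀ u : S, IsUnit u → u = 1)
    (hatomic : ∀ a : S, ¬IsUnit a →
      ∃ m : Multiset S, (∀ x ∈ m, Irreducible x) ∧ m.prod = a)
    (s : S) :
    sInf {N : ℕ∞ | ∀ (n : ℕ) (a : Fin n → S), s ∣ ∏ i, a i →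
        ∃ Ω : Finset (Fin n), (Ω.card : ℕ∞) ≤ N ∧ s ∣ ∏ i ∈ Ω, a i}
      =
    sSup {L : ℕ∞ | ∃ m : Multiset S, (∀ x ∈ m, Irreducible x) ∧ s ∣ m.prod ∧
        (∀ m' : Multiset S, m' ≤ m → s ∣ m'.prod → m' = m) ∧
        L = (Multiset.card m : ℕ∞)} := by
  classical
  apply le_antisymm
  · -- sInf ≤ sSup : show sSup is a valid bound N, i.e. belongs to the left set.
    apply sInf_le
    intro n a hs
    -- factor each a i into irreducibles
    have hfac : ∀ i : Fin n, ∃ fi : Multiset S,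
        (∀ x ∈ fi, Irreducible x) ∧ fi.prod = a i := by
      intro i
      by_cases hu : IsUnit (a i)
      · exact ⟨0, by simp, by simp [hred _ hu]⟩
      · exact hatomic _ hu
    choose f hf1 hf2 using hfac
    set m : Multiset S := ∑ i, f i with hm
    have hmprod : m.prod = ∏ i, a i := by
      rw [hm, Multiset.prod_sum]
      exact Finset.prod_congr rfl fun i _ => hf2 i
    have hsm : s ∣ m.prod := hmprod ▸ hs
    -- choose a minimal (by card) submultiset of m still divisible by s
    set K : Set ℕ := {k | ∃ t : Multiset S, t ≤ m ∧ s ∣ t.prod ∧ Multiset.card t = k}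
    have hKne : K.Nonempty := ⟨Multiset.card m, m, le_rfl, hsm, rfl⟩
    obtain ⟨t, htm, hst, htcard⟩ := Nat.sInf_mem hKne
    have hmin : ∀ t' : Multiset S, t' ≤ t → s ∣ t'.prod → t' = t := by
      intro t' ht' hst'
      refine Multiset.eq_of_le_of_card_le ht' ?_
      rw [htcard]
      exact Nat.sInf_le ⟨t', ht'.trans htm, hst', rfl⟩
    have htirr : ∀ x ∈ t, Irreducible x := by
      intro x hx
      have := Multiset.mem_of_le htm hx
      rw [hm, Multiset.mem_sum] at this
      obtain ⟨i, _, hxi⟩ := this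
      exact hf1 i x hxi
    -- (card t) is in the right-hand set
    have htmem : (Multiset.card t : ℕ∞) ∈ {L : ℕ∞ | ∃ m : Multiset S,
        (∀ x ∈ m, Irreducible x) ∧ s ∣ m.prod ∧
        (∀ m' : Multiset S, m' ≤ m → s ∣ m'.prod → m' = m) ∧
        L = (Multiset.card m : ℕ∞)} := ⟨t, htirr, hst, hmin, rfl⟩
    -- split t along the f i
    obtain ⟨g, hg, hgsum⟩ := multiset_split_sum Finset.univ f t htm
    set Ω : Finset (Fin n) := Finset.univ.filter (fun i => g i ≠ 0) with hΩ
    refine ⟨Ω, ?_, ?_⟩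
    · -- card Ω ≤ card t ≤ sSup
      refine le_trans ?_ (le_sSup htmem)
      have h1 : Ω.card ≤ Multiset.card t := by
        have hc : Multiset.card t = ∑ i, Multiset.card (g i) := by
          rw [hgsum]; simp
        rw [hc]
        calc Ω.card = ∑ i ∈ Ω, 1 := by simp
          _ ≤ ∑ i ∈ Ω, Multiset.card (g i) := by
              refine Finset.sum_le_sum fun i hi => ?_
              rw [hΩ, Finset.mem_filter] at hi
              exact Nat.one_le_iff_ne_zero.mpr (by simpa using hi.2)
          _ ≤ ∑ i, Multiset.card (g i) :=
              Finset.sum_le_sum_of_subset (Finset.subset_univ _)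
      exact Nat.cast_le.mpr h1
    · -- s divides the product over Ω
      have h2 : t.prod = ∏ i ∈ Ω, (g i).prod := by
        rw [hgsum, Multiset.prod_sum]
        refine (Finset.prod_subset (Finset.subset_univ _) fun i _ hi => ?_).symm
        rw [hΩ, Finset.mem_filter] at hi
        push_neg at hi
        rw [hi (Finset.mem_univ i), Multiset.prod_zero]
      have h3 : (∏ i ∈ Ω, (g i).prod) ∣ ∏ i ∈ Ω, a i := by
        refine Finset.prod_dvd_prod_of_dvd _ _ fun i _ => ?_
        rw [← hf2 i]
        exact Multiset.prod_dvd_prod_of_le (hg i)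
      exact (h2 ▸ hst).trans h3
  · -- sSup ≤ sInf
    refine sSup_le fun L hL => le_sInf fun N hN => ?_
    obtain ⟨m, hirr, hdvd, hmin, rfl⟩ := hL
    set l : List S := m.toList with hl
    have hlm : (l : Multiset S) = m := Multiset.coe_toList m
    have hprod : (∏ i : Fin l.length, l.get i) = m.prod := by
      rw [← hlm]
      simpa using List.prod_univ_get l
    obtain ⟨Ω, hΩcard, hΩdvd⟩ := hN l.length l.get (hprod ▸ hdvd)
    -- the submultiset of m given by Ω
    set t : Multiset S := Ω.val.map l.get with ht
    have htm : t ≤ m := by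
      rw [← hlm, ht]
      calc Ω.val.map l.get ≤ (Finset.univ.val : Multiset (Fin l.length)).map l.get :=
            Multiset.map_le_map (Finset.val_le_iff.mpr (Finset.subset_univ _))
        _ = ↑((List.finRange l.length).map l.get) := by
            rw [Fin.univ_def]; rfl
        _ = ↑l := by rw [List.map_get_finRange]
    have htprod : t.prod = ∏ i ∈ Ω, l.get i := rfl
    have := hmin t htm (htprod ▸ hΩdvd)
    have hcard : Multiset.card m = Ω.card := by
      rw [← this, ht]
      simp
    rw [hcard]
    exact hΩcard
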